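/- Let K₀ > 0 and let f : ℝ → ℝ be twice differentiable on (0,∞) with f'(u) > 0 and f'(u)f''(u)/u = K₀ for all u > 0. Then there exist constants c₁, c₂ ∈ ℝ such that for all u > 0 one has f'(u) = √(K₀u² + c₁) and f(u) = (u/2)√(K₀u² + c₁) + (c₁/(2√K₀)) ln|2√K₀(√K₀ u + √(K₀u² + c₁))| + c₂. -/

import Mathlib

open Set Real

lemma const_on_Ioi {h : ℝ → ℝ} (hd : ∀ x ∈ Set.Ioi (0:ℝ), HasDerivAt h 0 x)
    {x y : ℝ} (hx : x ∈ Set.Ioi (0:ℝ)) (hy : y ∈ Set.Ioi (0:ℝ)) : h x = h y := by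
  have := Convex.norm_image_sub_le_of_norm_hasDerivWithin_le
    (f := h) (f' := fun _ => 0) (C := 0)
    (fun z hz => (hd z hz).hasDerivWithinAt) (fun z _ => by simp) (convex_Ioi 0) hx hy
  have h0 : ‖h y - h x‖ ≤ 0 := by simpa using this
  exact (sub_eq_zero.mp (norm_le_zero_iff.mp h0)).symm



/-- Classification of surfaces of revolution in the semi-isotropic space with constant
nonzero semi-relative curvature `K₀ > 0`: if `f` is twice differentiable on `(0,∞)` with
`f' > 0` and `f'(u)f''(u)/u = K₀` for all `u > 0`, then there are constants `c₁, c₂` with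
`f'(u) = √(K₀u² + c₁)` and
`f(u) = (u/2)√(K₀u² + c₁) + (c₁/(2√K₀)) ln|2√K₀(√K₀ u + √(K₀u² + c₁))| + c₂`. -/
theorem surface_of_revolution_constant_K
    (K₀ : ℝ) (hK₀ : 0 < K₀) (f : ℝ → ℝ)
    (hf : ∀ u ∈ Set.Ioi (0 : ℝ), DifferentiableAt ℝ f u)
    (hf' : ∀ u ∈ Set.Ioi (0 : ℝ), DifferentiableAt ℝ (deriv f) u)
    (hpos : ∀ u ∈ Set.Ioi (0 : ℝ), 0 < deriv f u)
    (hK : ∀ u ∈ Set.Ioi (0 : ℝ), deriv f u * deriv (deriv f) u / u = K₀) :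
    ∃ c₁ c₂ : ℝ, ∀ u ∈ Set.Ioi (0 : ℝ),
      deriv f u = Real.sqrt (K₀ * u ^ 2 + c₁) ∧
      f u = u / 2 * Real.sqrt (K₀ * u ^ 2 + c₁)
          + c₁ / (2 * Real.sqrt K₀) *
              Real.log |2 * Real.sqrt K₀ * (Real.sqrt K₀ * u + Real.sqrt (K₀ * u ^ 2 + c₁))|
          + c₂ := by
  set c₁ : ℝ := (deriv f 1) ^ 2 - K₀ * 1 ^ 2 with hc₁
  -- step 1 : (deriv f u)^2 - K₀ u² is constant
  have h1 : ∀ u ∈ Set.Ioi (0:ℝ), (deriv f u) ^ 2 - K₀ * u ^ 2 = c₁ := by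
    intro u hu
    have hd : ∀ x ∈ Set.Ioi (0:ℝ),
        HasDerivAt (fun v => (deriv f v) ^ 2 - K₀ * v ^ 2) 0 x := by
      intro x hx
      have hx0 : (x:ℝ) ≠ 0 := ne_of_gt hx
      have h2 : deriv f x * deriv (deriv f) x = K₀ * x := by
        have := hK x hx
        field_simp at this
        linarith [this]
      have : HasDerivAt (fun v => (deriv f v) ^ 2 - K₀ * v ^ 2)
          (2 * deriv f x * deriv (deriv f) x - K₀ * (2 * x)) x := by
        have hA : HasDerivAt (fun v => (deriv f v) ^ 2)
            (2 * deriv f x * deriv (deriv f) x) x := by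
          simpa [mul_comm, mul_assoc, pow_two] using
            ((hf' x hx).hasDerivAt.fun_pow 2)
        have hB : HasDerivAt (fun v : ℝ => K₀ * v ^ 2) (K₀ * (2 * x)) x := by
          simpa using ((hasDerivAt_pow 2 x).const_mul K₀)
        simpa using hA.fun_sub hB
      convert this using 1
      linear_combination (-2 : ℝ) * h2
    exact (const_on_Ioi hd hu (Set.mem_Ioi.mpr one_pos))
  have hsq : ∀ u ∈ Set.Ioi (0:ℝ), K₀ * u ^ 2 + c₁ = (deriv f u) ^ 2 := by
    intro u hu; have := h1 u hu; linarith
  have hsqrt : ∀ u ∈ Set.Ioi (0:ℝ), Real.sqrt (K₀ * u ^ 2 + c₁) = deriv f u := by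
    intro u hu
    rw [hsq u hu, Real.sqrt_sq (hpos u hu).le]
  refine ⟨c₁, f 1 - (1 / 2 * Real.sqrt (K₀ * 1 ^ 2 + c₁)
      + c₁ / (2 * Real.sqrt K₀) *
        Real.log (2 * Real.sqrt K₀ * (Real.sqrt K₀ * 1 + Real.sqrt (K₀ * 1 ^ 2 + c₁)))), ?_⟩
  set F : ℝ → ℝ := fun u => u / 2 * Real.sqrt (K₀ * u ^ 2 + c₁)
      + c₁ / (2 * Real.sqrt K₀) *
        Real.log (2 * Real.sqrt K₀ * (Real.sqrt K₀ * u + Real.sqrt (K₀ * u ^ 2 + c₁))) with hF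
  have hsK : (0:ℝ) < Real.sqrt K₀ := Real.sqrt_pos.mpr hK₀
  have hFd : ∀ u ∈ Set.Ioi (0:ℝ), HasDerivAt F (Real.sqrt (K₀ * u ^ 2 + c₁)) u := by
    intro u hu
    have hu0 : (0:ℝ) < u := hu
    set g := Real.sqrt (K₀ * u ^ 2 + c₁) with hg
    have hgpos : 0 < g := by rw [hg, hsqrt u hu]; exact hpos u hu
    have hg2 : g ^ 2 = K₀ * u ^ 2 + c₁ := by
      rw [hg, Real.sq_sqrt]; rw [hsq u hu]; positivity
    have hinner : HasDerivAt (fun v : ℝ => K₀ * v ^ 2 + c₁) (K₀ * (2 * u)) u := by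
      simpa using (((hasDerivAt_pow 2 u).const_mul K₀).add_const c₁)
    have hgder : HasDerivAt (fun v => Real.sqrt (K₀ * v ^ 2 + c₁)) (K₀ * u / g) u := by
      have h0 : K₀ * u ^ 2 + c₁ ≠ 0 := by rw [← hg2]; positivity
      have := (Real.hasDerivAt_sqrt h0).comp u hinner
      refine this.congr_deriv ?_
      rw [← hg]
      field_simp
    have hspos : 0 < 2 * Real.sqrt K₀ * (Real.sqrt K₀ * u + g) := by positivity
    have harg : HasDerivAt (fun v => 2 * Real.sqrt K₀ * (Real.sqrt K₀ * v + Real.sqrt (K₀ * v ^ 2 + c₁)))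
        (2 * Real.sqrt K₀ * (Real.sqrt K₀ + K₀ * u / g)) u := by
      simpa using (((hasDerivAt_id u).const_mul (Real.sqrt K₀)).add hgder).const_mul (2 * Real.sqrt K₀)
    have hlog : HasDerivAt (fun v => Real.log (2 * Real.sqrt K₀ * (Real.sqrt K₀ * v + Real.sqrt (K₀ * v ^ 2 + c₁))))
        ((2 * Real.sqrt K₀ * (Real.sqrt K₀ + K₀ * u / g)) / (2 * Real.sqrt K₀ * (Real.sqrt K₀ * u + g))) u := by
      have := (Real.hasDerivAt_log (ne_of_gt hspos)).comp u harg
      refine this.congr_deriv ?_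
      field_simp
    have hprod : HasDerivAt (fun v => v / 2 * Real.sqrt (K₀ * v ^ 2 + c₁))
        (1 / 2 * g + u / 2 * (K₀ * u / g)) u := by
      have := ((hasDerivAt_id u).div_const 2).fun_mul hgder
      simpa [hg] using this
    have := hprod.add (hlog.const_mul (c₁ / (2 * Real.sqrt K₀)))
    rw [hF]
    refine this.congr_deriv ?_
    have hK2 : Real.sqrt K₀ * Real.sqrt K₀ = K₀ := Real.mul_self_sqrt hK₀.le
    have hsum : (0:ℝ) < Real.sqrt K₀ * u + g := by positivity
    field_simp
    linear_combination (-(Real.sqrt K₀) * (u * Real.sqrt K₀ + g)) * hg2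
      - c₁ * u * hK2
  -- f - F constant
  have hfF : ∀ x ∈ Set.Ioi (0:ℝ), HasDerivAt (fun v => f v - F v) 0 x := by
    intro x hx
    have := ((hf x hx).hasDerivAt).fun_sub (hFd x hx)
    simpa [hsqrt x hx] using this
  intro u hu
  refine ⟨(hsqrt u hu).symm, ?_⟩
  have := const_on_Ioi hfF hu (Set.mem_Ioi.mpr one_pos)
  have habs : |2 * Real.sqrt K₀ * (Real.sqrt K₀ * u + Real.sqrt (K₀ * u ^ 2 + c₁))|
      = 2 * Real.sqrt K₀ * (Real.sqrt K₀ * u + Real.sqrt (K₀ * u ^ 2 + c₁)) := by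
    apply abs_of_pos
    have : 0 < Real.sqrt (K₀ * u ^ 2 + c₁) := by rw [hsqrt u hu]; exact hpos u hu
    have hu0 : (0:ℝ) < u := hu
    positivity
  rw [habs]
  simp only [hF] at this ⊢
  linarith [this]
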